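/- Additivity of the odd index functional under composition: let A, B : ℝ → Matrix n n ℂ be Schwartz functions such that I + A(t) and I + B(t) are invertible for every t ∈ ℝ, and set C = A + B + A·B (pointwise matrix product), so that I + C(t) = (I + A(t))·(I + B(t)) is invertible for every t. Then ind(I+C) = ind(I+A) + ind(I+B), where ind(I+A) = (1/(2πi)) ∫_ℝ tr((I + A(t))⁻¹ · A′(t)) dt. -/

import Mathlib

/-!
STATEMENT 4: Additivity of the odd index functional under composition:
with `C = A + B + A·B` (so `I + C = (I + A)(I + B)`),
`ind(I+C) = ind(I+A) + ind(I+B)` where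
`ind(I+A) = (1/(2πi)) ∫ tr((I + A(t))⁻¹ A′(t)) dt`.
-/

attribute [local instance] Matrix.normedAddCommGroup Matrix.normedSpace

open MeasureTheory

noncomputable section

/-- The odd index functional `ind(I+A) = (1/(2πi)) ∫_ℝ tr((I + A(t))⁻¹ · A′(t)) dt`. -/
def oddIndex {n : ℕ} (A : ℝ → Matrix (Fin n) (Fin n) ℂ) : ℂ :=
  (1 / (2 * Real.pi * Complex.I)) *
    ∫ t : ℝ, Matrix.trace ((1 + A t)⁻¹ * deriv A t)

variable {n : ℕ}

abbrev Mn (n : ℕ) := Matrix (Fin n) (Fin n) ℂ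

lemma trace_norm_le (M : Mn n) : ‖M.trace‖ ≤ n * ‖M‖ := by
  calc ‖M.trace‖ ≤ ∑ i : Fin n, ‖M i i‖ := norm_sum_le _ _
  _ ≤ ∑ _i : Fin n, ‖M‖ := Finset.sum_le_sum fun i _ => Matrix.norm_entry_le_entrywise_sup_norm M
  _ = n * ‖M‖ := by simp [mul_comm]

lemma mul_norm_le (M N : Mn n) : ‖M * N‖ ≤ n * ‖M‖ * ‖N‖ := by
  rw [Matrix.norm_le_iff (by positivity)]
  intro i j
  calc ‖(M * N) i j‖ = ‖∑ k, M i k * N k j‖ := by rfl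
  _ ≤ ∑ k : Fin n, ‖M i k * N k j‖ := norm_sum_le _ _
  _ ≤ ∑ _k : Fin n, ‖M‖ * ‖N‖ := Finset.sum_le_sum fun k _ => by
      rw [norm_mul]
      exact mul_le_mul (Matrix.norm_entry_le_entrywise_sup_norm M)
        (Matrix.norm_entry_le_entrywise_sup_norm N) (norm_nonneg _) (norm_nonneg _)
  _ = n * ‖M‖ * ‖N‖ := by simp [mul_assoc, mul_comm]

lemma matMulBBM :
    IsBoundedBilinearMap ℝ (fun p : Mn n × Mn n => p.1 * p.2) where
  add_left _ _ _ := add_mul _ _ _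
  smul_left _ _ _ := smul_mul_assoc _ _ _
  add_right _ _ _ := mul_add _ _ _
  smul_right _ _ _ := mul_smul_comm _ _ _
  bound := ⟨n + 1, by positivity, fun x y => by
    calc ‖x * y‖ ≤ n * ‖x‖ * ‖y‖ := mul_norm_le x y
    _ ≤ (n + 1) * ‖x‖ * ‖y‖ := by
        have := norm_nonneg x; have := norm_nonneg y; nlinarith⟩
lemma cont_inv (A : SchwartzMap ℝ (Mn n)) (hA : ∀ t : ℝ, IsUnit (1 + A t)) :
    Continuous fun t => (1 + A t)⁻¹ := by
  have h1 : Continuous fun t : ℝ => 1 + A t := continuous_const.add A.continuous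
  rw [continuous_iff_continuousAt]
  intro t
  have hu := (Matrix.isUnit_iff_isUnit_det (1 + A t)).mp (hA t)
  have : ContinuousAt Ring.inverse ((1 + A t).det) := by
    simpa [hu.unit_spec] using NormedRing.inverse_continuousAt hu.unit
  exact ContinuousAt.comp (x := t) (continuousAt_matrix_inv _ this) h1.continuousAt

lemma tendsto_inv_cocompact (A : SchwartzMap ℝ (Mn n)) (hA : ∀ t : ℝ, IsUnit (1 + A t)) :
    Filter.Tendsto (fun t => (1 + A t)⁻¹) (Filter.cocompact ℝ) (nhds 1) := by
  have h0 : Filter.Tendsto (fun t => A t) (Filter.cocompact ℝ) (nhds 0) :=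
    zero_at_infty A
  have h1 : Filter.Tendsto (fun t : ℝ => 1 + A t) (Filter.cocompact ℝ) (nhds 1) := by
    simpa using (tendsto_const_nhds.add h0 :)
  have hu : IsUnit ((1 : Mn n).det) := by simp
  have hc : ContinuousAt Inv.inv (1 : Mn n) :=
    continuousAt_matrix_inv _ (by
      simpa [hu.unit_spec] using NormedRing.inverse_continuousAt hu.unit)
  have h2 := hc.tendsto.comp h1
  simpa [Function.comp_def] using h2
lemma bounded_inv (A : SchwartzMap ℝ (Mn n)) (hA : ∀ t : ℝ, IsUnit (1 + A t)) :
    ∃ c : ℝ, 0 ≤ c ∧ ∀ t : ℝ, ‖(1 + A t)⁻¹‖ ≤ c := by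
  have hev : ∀ᶠ t in Filter.cocompact ℝ, ‖(1 + A t)⁻¹‖ < ‖(1 : Mn n)‖ + 1 := by
    have := (tendsto_inv_cocompact A hA).norm
    exact this.eventually_lt_const (by linarith [norm_nonneg (1 : Mn n)])
  obtain ⟨K, hK, hKsub⟩ := Filter.mem_cocompact.mp hev
  obtain ⟨C, hC⟩ := (hK.image (cont_inv A hA).norm).bddAbove
  refine ⟨max C (‖(1 : Mn n)‖ + 1), le_max_of_le_right (by positivity), fun t => ?_⟩
  by_cases ht : t ∈ K
  · exact le_max_of_le_left (hC ⟨t, ht, rfl⟩)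
  · exact le_max_of_le_right (hKsub ht).le

lemma integrable_ind (A : SchwartzMap ℝ (Mn n)) (hA : ∀ t : ℝ, IsUnit (1 + A t)) :
    Integrable (fun t => ((1 + A t)⁻¹ * deriv (⇑A) t).trace) := by
  obtain ⟨c, hc0, hc⟩ := bounded_inv A hA
  set A' := SchwartzMap.derivCLM ℝ (Mn n) A with hA'
  have hA'eq : ∀ t, A' t = deriv (⇑A) t := fun t => rfl
  have hcont : Continuous fun t => ((1 + A t)⁻¹ * deriv (⇑A) t).trace := by
    have : Continuous (deriv (⇑A)) := by
      have := A'.continuous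
      exact this
    exact ((cont_inv A hA).matrix_mul this).matrix_trace
  refine Integrable.mono' (g := fun t => (n * (n * c)) * ‖A' t‖)
    ((A'.integrable.norm).const_mul _) hcont.aestronglyMeasurable (Filter.Eventually.of_forall fun t => ?_)
  calc ‖((1 + A t)⁻¹ * deriv (⇑A) t).trace‖ ≤ n * ‖(1 + A t)⁻¹ * deriv (⇑A) t‖ :=
        trace_norm_le _
  _ ≤ n * (n * ‖(1 + A t)⁻¹‖ * ‖deriv (⇑A) t‖) := by
      have h3 : (0:ℝ) ≤ n := Nat.cast_nonneg n
      exact mul_le_mul_of_nonneg_left (mul_norm_le _ _) h3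
  _ ≤ n * (n * c) * ‖A' t‖ := by
      rw [hA'eq, show (n:ℝ) * ((n:ℝ) * ‖(1 + A t)⁻¹‖ * ‖deriv (⇑A) t‖)
          = (n:ℝ) * (n:ℝ) * ‖deriv (⇑A) t‖ * ‖(1 + A t)⁻¹‖ by ring,
        show (n:ℝ) * ((n:ℝ) * c) * ‖deriv (⇑A) t‖
          = (n:ℝ) * (n:ℝ) * ‖deriv (⇑A) t‖ * c by ring]
      exact mul_le_mul_of_nonneg_left (hc t) (by positivity)
lemma key_pointwise (A B : SchwartzMap ℝ (Mn n))
    (hA : ∀ t : ℝ, IsUnit (1 + A t)) (hB : ∀ t : ℝ, IsUnit (1 + B t)) (t : ℝ) :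
    ((1 + (A t + B t + A t * B t))⁻¹ * deriv (fun s => A s + B s + A s * B s) t).trace
      = ((1 + A t)⁻¹ * deriv (⇑A) t).trace + ((1 + B t)⁻¹ * deriv (⇑B) t).trace := by
  have hAd : HasDerivAt (⇑A) (deriv (⇑A) t) t :=
    ((A.smooth 1).differentiable one_ne_zero).differentiableAt.hasDerivAt
  have hBd : HasDerivAt (⇑B) (deriv (⇑B) t) t :=
    ((B.smooth 1).differentiable one_ne_zero).differentiableAt.hasDerivAt
  have hmul : HasDerivAt (fun s => A s * B s)
      (deriv (⇑A) t * B t + A t * deriv (⇑B) t) t := by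
    have h := ((matMulBBM (n := n)).hasFDerivAt (A t, B t)).comp_hasDerivAt t (hAd.prodMk hBd)
    simp [IsBoundedBilinearMap.deriv_apply, add_comm] at h
    exact h
  have hCd : HasDerivAt (fun s => A s + B s + A s * B s)
      (deriv (⇑A) t + deriv (⇑B) t + (deriv (⇑A) t * B t + A t * deriv (⇑B) t)) t :=
    (hAd.add hBd).add hmul
  rw [show deriv (fun s => A s + B s + A s * B s) t = _ from hCd.deriv]
  set a := A t; set b := B t; set da := deriv (⇑A) t; set db := deriv (⇑B) t
  have hadet : IsUnit (1 + a).det := (Matrix.isUnit_iff_isUnit_det _).mp (hA t)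
  have hbdet : IsUnit (1 + b).det := (Matrix.isUnit_iff_isUnit_det _).mp (hB t)
  have h1 : (1 : Mn n) + (a + b + a * b) = (1 + a) * (1 + b) := by noncomm_ring
  rw [h1, Matrix.mul_inv_rev]
  have e1 : (1 + b)⁻¹ * (1 + a)⁻¹ * (da + db + (da * b + a * db))
      = (1 + b)⁻¹ * ((1 + a)⁻¹ * (da * (1 + b))) + (1 + b)⁻¹ * ((1 + a)⁻¹ * (1 + a) * db) := by
    noncomm_ring
  rw [e1, Matrix.trace_add, Matrix.nonsing_inv_mul _ hadet, Matrix.one_mul,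
    Matrix.trace_mul_comm ((1 + b)⁻¹) ((1 + a)⁻¹ * (da * (1 + b)))]
  have e2 : (1 + a)⁻¹ * (da * (1 + b)) * (1 + b)⁻¹
      = (1 + a)⁻¹ * (da * ((1 + b) * (1 + b)⁻¹)) := by noncomm_ring
  rw [e2, Matrix.mul_nonsing_inv _ hbdet, mul_one]

theorem odd_index_additive {n : ℕ}
    (A B : SchwartzMap ℝ (Matrix (Fin n) (Fin n) ℂ))
    (hA : ∀ t : ℝ, IsUnit (1 + A t)) (hB : ∀ t : ℝ, IsUnit (1 + B t))
    (C : ℝ → Matrix (Fin n) (Fin n) ℂ)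
    (hC : C = fun t => A t + B t + A t * B t) :
    oddIndex C = oddIndex (⇑A) + oddIndex (⇑B) := by
  subst hC
  unfold oddIndex
  have hsplit : (∫ t : ℝ, Matrix.trace
        ((1 + (A t + B t + A t * B t))⁻¹ * deriv (fun s => A s + B s + A s * B s) t))
      = (∫ t : ℝ, Matrix.trace ((1 + A t)⁻¹ * deriv (⇑A) t))
        + (∫ t : ℝ, Matrix.trace ((1 + B t)⁻¹ * deriv (⇑B) t)) := by
    rw [← integral_add (integrable_ind A hA) (integrable_ind B hB)]
    exact integral_congr_ae (Filter.Eventually.of_forall fun t => key_pointwise A B hA hB t)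
  simp only []
  rw [hsplit]
  ring

end
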